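/- In the nil-Hecke algebra, for each composition (r_1,...,r_m) of r, the element E = E_1⋯E_m where E_j = (∂_{j,1} x_{j,1})(∂_{j,2} x_{j,2} ∂_{j,1} x_{j,1})⋯(∂_{j,r_j-1} x_{j,r_j-1} ⋯ ∂_{j,1} x_{j,1}) (with ∂_{j,i}, x_{j,i} the operators ∂_{r_1+⋯+r_{j-1}+i}, x_{r_1+⋯+r_{j-1}+i} acting on ℤ[x_1,...,x_r]) is an idempotent whose image is the ring of invariants ℤ[x_1,...,x_r]^{S_{r_1}×⋯×S_{r_m}}. -/

import Mathlib

open MvPolynomial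

/-- The Demazure (divided difference) operator on `ℤ`-polynomials associated to the pair of
variables `i`, `j`: the unique `g` with `(X i - X j) * g = f - s f`, where `s` swaps `i` and `j`. -/
noncomputable def demazure {σ : Type} [DecidableEq σ] (i j : σ)
    (f : MvPolynomial σ ℤ) : MvPolynomial σ ℤ := by
  classical
  exact if h : ∃ g, (X i - X j) * g = f - rename (Equiv.swap i j) f then h.choose else 0

/-- The operator `∂_t ∘ (x_t ·)` (0-indexed: `∂_t` swaps the variables `t` and `t+1`). -/
noncomputable def DX (t : ℕ) : MvPolynomial ℕ ℤ → MvPolynomial ℕ ℤ :=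
  fun f => demazure t (t + 1) (X t * f)

/-- `Cblock t0 t = (∂_{t0+t-1} x_{t0+t-1}) ∘ ⋯ ∘ (∂_{t0} x_{t0})` (0-indexed). -/
noncomputable def Cblock (t0 : ℕ) : ℕ → (MvPolynomial ℕ ℤ → MvPolynomial ℕ ℤ)
  | 0 => id
  | (s + 1) => DX (t0 + s) ∘ Cblock t0 s

noncomputable def EjAux (t0 : ℕ) : ℕ → (MvPolynomial ℕ ℤ → MvPolynomial ℕ ℤ)
  | 0 => id
  | (s + 1) => EjAux t0 s ∘ Cblock t0 (s + 1)

/-- The factor `E_j = (∂_{j,1}x_{j,1})(∂_{j,2}x_{j,2}∂_{j,1}x_{j,1})⋯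
(∂_{j,r_j-1}x_{j,r_j-1}⋯∂_{j,1}x_{j,1})` for a block of size `rj` starting at index `t0`. -/
noncomputable def Ej (t0 rj : ℕ) : MvPolynomial ℕ ℤ → MvPolynomial ℕ ℤ :=
  EjAux t0 (rj - 1)

/-- `off m rs j = r_1 + ⋯ + r_{j-1}`, the starting index of the `j`-th block. -/
def off (m : ℕ) (rs : Fin m → ℕ) (j : Fin m) : ℕ :=
  ∑ j' ∈ Finset.univ.filter (· < j), rs j'

/-- The nil-Hecke idempotent `E = E_1 E_2 ⋯ E_m` associated to the composition `(r_1,…,r_m)`. -/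
noncomputable def Efull (m : ℕ) (rs : Fin m → ℕ) : MvPolynomial ℕ ℤ → MvPolynomial ℕ ℤ :=
  (List.ofFn fun j : Fin m => Ej (off m rs j) (rs j)).foldr (· ∘ ·) id




lemma X_sub_X_ne_zero {i j : ℕ} (h : i ≠ j) : (X i - X j : MvPolynomial ℕ ℤ) ≠ 0 :=
  sub_ne_zero.mpr (fun he => h (X_injective he))

lemma sub_rename_swap_dvd (i j : ℕ) (f : MvPolynomial ℕ ℤ) :
    (X i - X j) ∣ (f - rename (Equiv.swap i j) f) := by
  rw [← Ideal.mem_span_singleton]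
  set I := Ideal.span {(X i - X j : MvPolynomial ℕ ℤ)} with hI
  have hx : Ideal.Quotient.mk I (X i) = Ideal.Quotient.mk I (X j) := by
    rw [Ideal.Quotient.eq]
    exact Ideal.subset_span rfl
  have hcomp : (Ideal.Quotient.mk I).comp
      (rename (⇑(Equiv.swap i j)) : MvPolynomial ℕ ℤ →ₐ[ℤ] MvPolynomial ℕ ℤ).toRingHom
      = (Ideal.Quotient.mk I : MvPolynomial ℕ ℤ →+* _) := by
    apply MvPolynomial.ringHom_ext
    · intro r; simp
    · intro k
      by_cases hk : k = i
      · subst hk; simp [Equiv.swap_apply_left, hx]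
      · by_cases hk' : k = j
        · subst hk'; simp [Equiv.swap_apply_right, hx]
        · simp [Equiv.swap_apply_of_ne_of_ne hk hk']
  have h2 : Ideal.Quotient.mk I (f - rename (Equiv.swap i j) f) = 0 := by
    have := RingHom.congr_fun hcomp f
    simp only [RingHom.coe_comp, Function.comp_apply, AlgHom.toRingHom_eq_coe,
      RingHom.coe_coe] at this
    rw [map_sub, this, sub_self]
  exact (Ideal.Quotient.eq_zero_iff_mem).1 h2

lemma demazure_spec {i j : ℕ} (h : i ≠ j) (f : MvPolynomial ℕ ℤ) :
    (X i - X j) * demazure i j f = f - rename (Equiv.swap i j) f := by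
  obtain ⟨g, hg⟩ := sub_rename_swap_dvd i j f
  have hex : ∃ g, (X i - X j) * g = f - rename (Equiv.swap i j) f := ⟨g, hg.symm⟩
  unfold demazure
  rw [dif_pos hex]
  exact hex.choose_spec

lemma demazure_unique {i j : ℕ} (h : i ≠ j) {f g : MvPolynomial ℕ ℤ}
    (hg : (X i - X j) * g = f - rename (Equiv.swap i j) f) : demazure i j f = g :=
  mul_left_cancel₀ (X_sub_X_ne_zero h) (by rw [demazure_spec h, hg])





lemma rename_demazure (w : Equiv.Perm ℕ) {i j : ℕ} (h : i ≠ j) (f : MvPolynomial ℕ ℤ) :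
    rename (⇑w) (demazure i j f) = demazure (w i) (w j) (rename (⇑w) f) := by
  symm
  apply demazure_unique (fun he => h (w.injective he))
  have hsw : ⇑(Equiv.swap (w i) (w j)) ∘ ⇑w = ⇑w ∘ ⇑(Equiv.swap i j) := by
    funext x
    rw [Equiv.swap_apply_apply]
    simp [Equiv.Perm.mul_apply]
  have := congrArg (rename (⇑w)) (demazure_spec h f)
  rw [map_mul, map_sub, map_sub, rename_X, rename_X, rename_rename, ← hsw,
    ← rename_rename] at this
  exact this

lemma demazure_X_mul {i j k : ℕ} (hk : k ≠ i) (hk' : k ≠ j) (h : i ≠ j) (f : MvPolynomial ℕ ℤ) :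
    demazure i j (X k * f) = X k * demazure i j f := by
  apply demazure_unique h
  have hr : rename (⇑(Equiv.swap i j)) (X k * f) = X k * rename (⇑(Equiv.swap i j)) f := by
    rw [map_mul, rename_X, Equiv.swap_apply_of_ne_of_ne hk hk']
  rw [hr]
  linear_combination X k * demazure_spec h f

lemma demazure_swap_neg {i j : ℕ} (h : i ≠ j) (f : MvPolynomial ℕ ℤ) :
    demazure j i f = - demazure i j f := by
  apply demazure_unique h.symm
  rw [Equiv.swap_comm]
  linear_combination demazure_spec h f

lemma rename_swap_demazure {i j : ℕ} (h : i ≠ j) (f : MvPolynomial ℕ ℤ) :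
    rename (⇑(Equiv.swap i j)) (demazure i j f) = demazure i j f := by
  have hsw : ⇑(Equiv.swap i j) ∘ ⇑(Equiv.swap i j) = id := by
    funext x; simp
  have := congrArg (rename (⇑(Equiv.swap i j))) (demazure_spec h f)
  rw [map_mul, map_sub, map_sub, rename_X, rename_X, Equiv.swap_apply_left,
    Equiv.swap_apply_right, rename_rename, hsw, rename_id, AlgHom.id_apply] at this
  have h2 : (X i - X j) * rename (⇑(Equiv.swap i j)) (demazure i j f)
      = (X i - X j) * demazure i j f := by
    rw [demazure_spec h]
    linear_combination (-1 : MvPolynomial ℕ ℤ) * this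
  exact mul_left_cancel₀ (X_sub_X_ne_zero h) h2

lemma demazure_X_mul_self {i j : ℕ} (h : i ≠ j) {f : MvPolynomial ℕ ℤ}
    (hf : rename (⇑(Equiv.swap i j)) f = f) : demazure i j (X i * f) = f := by
  apply demazure_unique h
  rw [map_mul, rename_X, Equiv.swap_apply_left, hf]
  ring





lemma DX_spec (t : ℕ) (f : MvPolynomial ℕ ℤ) :
    (X t - X (t+1)) * DX t f = X t * f - X (t+1) * rename (⇑(Equiv.swap t (t+1))) f := by
  have h : t ≠ t + 1 := by omega
  rw [DX, demazure_spec h, map_mul, rename_X, Equiv.swap_apply_left]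

lemma DX_rename_swap (t : ℕ) (f : MvPolynomial ℕ ℤ) :
    rename (⇑(Equiv.swap t (t+1))) (DX t f) = DX t f :=
  rename_swap_demazure (by omega) _

lemma DX_fix {t : ℕ} {f : MvPolynomial ℕ ℤ}
    (hf : rename (⇑(Equiv.swap t (t+1))) f = f) : DX t f = f :=
  demazure_X_mul_self (by omega) hf

lemma rename_DX (w : Equiv.Perm ℕ) {t : ℕ} (h1 : w t = t) (h2 : w (t+1) = t+1)
    (f : MvPolynomial ℕ ℤ) : rename (⇑w) (DX t f) = DX t (rename (⇑w) f) := by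
  rw [DX, rename_demazure w (by omega : t ≠ t+1), h1, h2, map_mul, rename_X, h1, DX]

lemma swap_coe_comm {t u : ℕ} (h : t + 2 ≤ u) :
    ⇑(Equiv.swap u (u+1)) ∘ ⇑(Equiv.swap t (t+1)) =
      ⇑(Equiv.swap t (t+1)) ∘ ⇑(Equiv.swap u (u+1)) := by
  funext x
  simp only [Function.comp_apply, Equiv.swap_apply_def]
  split_ifs <;> omega

lemma DX_comm {t u : ℕ} (h : t + 2 ≤ u) (f : MvPolynomial ℕ ℤ) :
    DX t (DX u f) = DX u (DX t f) := by
  have hswt : ∀ k, t + 2 ≤ k → Equiv.swap t (t+1) k = k := fun k hk =>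
    Equiv.swap_apply_of_ne_of_ne (by omega) (by omega)
  have hswu : ∀ k, k + 1 ≤ u → Equiv.swap u (u+1) k = k := fun k hk =>
    Equiv.swap_apply_of_ne_of_ne (by omega) (by omega)
  have E1 : (X u - X (u+1)) * DX u f
      = X u * f - X (u+1) * rename (⇑(Equiv.swap u (u+1))) f := DX_spec u f
  have hsg1 : rename (⇑(Equiv.swap t (t+1))) (DX u f)
      = DX u (rename (⇑(Equiv.swap t (t+1))) f) :=
    rename_DX _ (hswt u (by omega)) (hswt (u+1) (by omega)) f
  have Eh : (X u - X (u+1)) * rename (⇑(Equiv.swap t (t+1))) (DX u f)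
      = X u * rename (⇑(Equiv.swap t (t+1))) f
        - X (u+1) * rename (⇑(Equiv.swap t (t+1)) ∘ ⇑(Equiv.swap u (u+1))) f := by
    rw [hsg1]
    have h2 := DX_spec u (rename (⇑(Equiv.swap t (t+1))) f)
    rw [rename_rename, swap_coe_comm h] at h2
    exact h2
  have EL : (X t - X (t+1)) * DX t (DX u f)
      = X t * DX u f - X (t+1) * rename (⇑(Equiv.swap t (t+1))) (DX u f) :=
    DX_spec t (DX u f)
  have E1' : (X t - X (t+1)) * DX t f
      = X t * f - X (t+1) * rename (⇑(Equiv.swap t (t+1))) f := DX_spec t f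
  have hsg1' : rename (⇑(Equiv.swap u (u+1))) (DX t f)
      = DX t (rename (⇑(Equiv.swap u (u+1))) f) :=
    rename_DX _ (hswu t (by omega)) (hswu (t+1) (by omega)) f
  have Eh' : (X t - X (t+1)) * rename (⇑(Equiv.swap u (u+1))) (DX t f)
      = X t * rename (⇑(Equiv.swap u (u+1))) f
        - X (t+1) * rename (⇑(Equiv.swap t (t+1)) ∘ ⇑(Equiv.swap u (u+1))) f := by
    rw [hsg1']
    have h2 := DX_spec t (rename (⇑(Equiv.swap u (u+1))) f)
    rw [rename_rename] at h2
    exact h2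
  have ER : (X u - X (u+1)) * DX u (DX t f)
      = X u * DX t f - X (u+1) * rename (⇑(Equiv.swap u (u+1))) (DX t f) :=
    DX_spec u (DX t f)
  have hab : (X t - X (t+1) : MvPolynomial ℕ ℤ) ≠ 0 := X_sub_X_ne_zero (by omega)
  have hpq : (X u - X (u+1) : MvPolynomial ℕ ℤ) ≠ 0 := X_sub_X_ne_zero (by omega)
  apply mul_left_cancel₀ (mul_ne_zero hab hpq)
  linear_combination (X u - X (u+1)) * EL + X t * E1 - X (t+1) * Eh
    - (X t - X (t+1)) * ER - X u * E1' + X (u+1) * Eh'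

lemma swap_coe_braid1 (t : ℕ) :
    ⇑(Equiv.swap t (t+2)) ∘ ⇑(Equiv.swap t (t+1)) =
      ⇑(Equiv.swap (t+1) (t+2)) ∘ ⇑(Equiv.swap t (t+2)) := by
  funext x
  simp only [Function.comp_apply, Equiv.swap_apply_def]
  split_ifs <;> omega

lemma swap_coe_braid2 (t : ℕ) :
    ⇑(Equiv.swap t (t+1)) ∘ ⇑(Equiv.swap t (t+2)) =
      ⇑(Equiv.swap t (t+2)) ∘ ⇑(Equiv.swap (t+1) (t+2)) := by
  funext x
  simp only [Function.comp_apply, Equiv.swap_apply_def]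
  split_ifs <;> omega

lemma DX_braid (t : ℕ) (f : MvPolynomial ℕ ℤ) :
    DX t (DX (t+1) (DX t f)) = DX (t+1) (DX t (DX (t+1) f)) := by
  have hnorm : t + 1 + 1 = t + 2 := rfl
  have h01 : t ≠ t + 1 := by omega
  have h02 : t ≠ t + 2 := by omega
  have h12 : t + 1 ≠ t + 2 := by omega
  -- swap application facts
  have w2t : (Equiv.swap (t+1) (t+2)) t = t :=
    Equiv.swap_apply_of_ne_of_ne (by omega) (by omega)
  have w1t2 : (Equiv.swap t (t+1)) (t+2) = t + 2 :=
    Equiv.swap_apply_of_ne_of_ne (by omega) (by omega)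
  have wrt1 : (Equiv.swap t (t+2)) (t+1) = t + 1 :=
    Equiv.swap_apply_of_ne_of_ne (by omega) (by omega)
  have hDX1 : DX (t+1) = fun g => demazure (t+1) (t+2) (X (t+1) * g) := by
    funext g; rw [DX, hnorm]
  -- LHS chain
  have E1 := DX_spec t f
  have E2 : (X (t+1) - X (t+2)) * DX (t+1) (DX t f)
      = X (t+1) * DX t f
        - X (t+2) * rename (⇑(Equiv.swap (t+1) (t+2))) (DX t f) := by
    have := DX_spec (t+1) (DX t f); rwa [hnorm] at this
  have e1 : rename (⇑(Equiv.swap (t+1) (t+2))) (DX t f)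
      = demazure t (t+2) (X t * rename (⇑(Equiv.swap (t+1) (t+2))) f) := by
    rw [DX, rename_demazure _ h01, w2t, Equiv.swap_apply_left, map_mul, rename_X, w2t]
  have Eh1 : (X t - X (t+2)) * rename (⇑(Equiv.swap (t+1) (t+2))) (DX t f)
      = X t * rename (⇑(Equiv.swap (t+1) (t+2))) f
        - X (t+2) * rename (⇑(Equiv.swap t (t+2)) ∘ ⇑(Equiv.swap (t+1) (t+2))) f := by
    rw [e1]
    have h2 := demazure_spec h02 (X t * rename (⇑(Equiv.swap (t+1) (t+2))) f)
    rw [map_mul, rename_X, Equiv.swap_apply_left, rename_rename] at h2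
    exact h2
  have e3 : rename (⇑(Equiv.swap t (t+2))) (DX t f)
      = demazure (t+2) (t+1) (X (t+2) * rename (⇑(Equiv.swap t (t+2))) f) := by
    rw [DX, rename_demazure _ h01, Equiv.swap_apply_left, wrt1, map_mul, rename_X,
      Equiv.swap_apply_left]
  have Eh3 : (X (t+1) - X (t+2)) * rename (⇑(Equiv.swap t (t+2))) (DX t f)
      = X (t+1) * rename (⇑(Equiv.swap (t+1) (t+2)) ∘ ⇑(Equiv.swap t (t+2))) f
        - X (t+2) * rename (⇑(Equiv.swap t (t+2))) f := by
    rw [e3, demazure_swap_neg h12]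
    have h2 := demazure_spec h12 (X (t+2) * rename (⇑(Equiv.swap t (t+2))) f)
    rw [map_mul, rename_X, Equiv.swap_apply_right, rename_rename] at h2
    linear_combination -h2
  have e2 : rename (⇑(Equiv.swap t (t+1))) (DX (t+1) (DX t f))
      = demazure t (t+2) (X t * DX t f) := by
    rw [hDX1]
    simp only
    rw [rename_demazure _ h12, Equiv.swap_apply_right, w1t2, map_mul, rename_X,
      Equiv.swap_apply_right, DX_rename_swap]
  have Eh2 : (X t - X (t+2)) * rename (⇑(Equiv.swap t (t+1))) (DX (t+1) (DX t f))
      = X t * DX t f - X (t+2) * rename (⇑(Equiv.swap t (t+2))) (DX t f) := by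
    rw [e2]
    have h2 := demazure_spec h02 (X t * DX t f)
    rw [map_mul, rename_X, Equiv.swap_apply_left] at h2
    exact h2
  have Eg3 := DX_spec t (DX (t+1) (DX t f))
  -- RHS chain
  have E1' : (X (t+1) - X (t+2)) * DX (t+1) f
      = X (t+1) * f - X (t+2) * rename (⇑(Equiv.swap (t+1) (t+2))) f := by
    have := DX_spec (t+1) f; rwa [hnorm] at this
  have e1' : rename (⇑(Equiv.swap t (t+1))) (DX (t+1) f)
      = demazure t (t+2) (X t * rename (⇑(Equiv.swap t (t+1))) f) := by
    rw [hDX1]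
    simp only
    rw [rename_demazure _ h12, Equiv.swap_apply_right, w1t2, map_mul, rename_X,
      Equiv.swap_apply_right]
  have Eh1' : (X t - X (t+2)) * rename (⇑(Equiv.swap t (t+1))) (DX (t+1) f)
      = X t * rename (⇑(Equiv.swap t (t+1))) f
        - X (t+2) * rename (⇑(Equiv.swap (t+1) (t+2)) ∘ ⇑(Equiv.swap t (t+2))) f := by
    rw [e1']
    have h2 := demazure_spec h02 (X t * rename (⇑(Equiv.swap t (t+1))) f)
    rw [map_mul, rename_X, Equiv.swap_apply_left, rename_rename, swap_coe_braid1] at h2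
    exact h2
  have Eg2' := DX_spec t (DX (t+1) f)
  have e3' : rename (⇑(Equiv.swap t (t+2))) (DX (t+1) f)
      = demazure (t+1) t (X (t+1) * rename (⇑(Equiv.swap t (t+2))) f) := by
    rw [hDX1]
    simp only
    rw [rename_demazure _ h12, wrt1, Equiv.swap_apply_right, map_mul, rename_X, wrt1]
  have Eh3' : (X t - X (t+1)) * rename (⇑(Equiv.swap t (t+2))) (DX (t+1) f)
      = X t * rename (⇑(Equiv.swap t (t+2)) ∘ ⇑(Equiv.swap (t+1) (t+2))) f
        - X (t+1) * rename (⇑(Equiv.swap t (t+2))) f := by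
    rw [e3', demazure_swap_neg h01]
    have h2 := demazure_spec h01 (X (t+1) * rename (⇑(Equiv.swap t (t+2))) f)
    rw [map_mul, rename_X, Equiv.swap_apply_right, rename_rename, swap_coe_braid2] at h2
    linear_combination -h2
  have e2' : rename (⇑(Equiv.swap (t+1) (t+2))) (DX t (DX (t+1) f))
      = demazure t (t+2) (X t * DX (t+1) f) := by
    rw [DX, rename_demazure _ h01, w2t, Equiv.swap_apply_left, map_mul, rename_X, w2t]
    rw [hDX1]
    simp only
    rw [rename_swap_demazure h12]
  have Eh2' : (X t - X (t+2)) * rename (⇑(Equiv.swap (t+1) (t+2))) (DX t (DX (t+1) f))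
      = X t * DX (t+1) f - X (t+2) * rename (⇑(Equiv.swap t (t+2))) (DX (t+1) f) := by
    rw [e2']
    have h2 := demazure_spec h02 (X t * DX (t+1) f)
    rw [map_mul, rename_X, Equiv.swap_apply_left] at h2
    exact h2
  have Eg3' : (X (t+1) - X (t+2)) * DX (t+1) (DX t (DX (t+1) f))
      = X (t+1) * DX t (DX (t+1) f)
        - X (t+2) * rename (⇑(Equiv.swap (t+1) (t+2))) (DX t (DX (t+1) f)) := by
    have := DX_spec (t+1) (DX t (DX (t+1) f)); rwa [hnorm] at this
  -- assemble
  have hab : (X t - X (t+1) : MvPolynomial ℕ ℤ) ≠ 0 := X_sub_X_ne_zero h01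
  have hac : (X t - X (t+2) : MvPolynomial ℕ ℤ) ≠ 0 := X_sub_X_ne_zero h02
  have hbc : (X (t+1) - X (t+2) : MvPolynomial ℕ ℤ) ≠ 0 := X_sub_X_ne_zero h12
  have K2 : (X t - X (t+1)) * (X t - X (t+2)) * (X (t+1) - X (t+2)) * DX (t+1) (DX t f)
      = (X t - X (t+2)) * X (t+1) * (X t * f - X (t+1) * rename (⇑(Equiv.swap t (t+1))) f)
        - (X t - X (t+1)) * X (t+2) *
          (X t * rename (⇑(Equiv.swap (t+1) (t+2))) f
            - X (t+2) * rename (⇑(Equiv.swap t (t+2)) ∘ ⇑(Equiv.swap (t+1) (t+2))) f) := by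
    linear_combination (X t - X (t+1)) * (X t - X (t+2)) * E2
      + (X t - X (t+2)) * X (t+1) * E1 - (X t - X (t+1)) * X (t+2) * Eh1
  have K2h : (X t - X (t+1)) * (X t - X (t+2)) * (X (t+1) - X (t+2)) *
        rename (⇑(Equiv.swap t (t+1))) (DX (t+1) (DX t f))
      = (X (t+1) - X (t+2)) * X t * (X t * f - X (t+1) * rename (⇑(Equiv.swap t (t+1))) f)
        - (X t - X (t+1)) * X (t+2) *
          (X (t+1) * rename (⇑(Equiv.swap (t+1) (t+2)) ∘ ⇑(Equiv.swap t (t+2))) f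
            - X (t+2) * rename (⇑(Equiv.swap t (t+2))) f) := by
    linear_combination (X t - X (t+1)) * (X (t+1) - X (t+2)) * Eh2
      + X t * (X (t+1) - X (t+2)) * E1 - (X t - X (t+1)) * X (t+2) * Eh3
  have KL : (X t - X (t+1)) * ((X t - X (t+1)) * (X t - X (t+2)) * (X (t+1) - X (t+2)) *
        DX t (DX (t+1) (DX t f)))
      = (X t - X (t+1)) *
        (X t ^ 2 * X (t+1) * f
          - X t * X (t+1) ^ 2 * rename (⇑(Equiv.swap t (t+1))) f
          - X t ^ 2 * X (t+2) * rename (⇑(Equiv.swap (t+1) (t+2))) f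
          + X t * X (t+2) ^ 2 * rename (⇑(Equiv.swap t (t+2)) ∘ ⇑(Equiv.swap (t+1) (t+2))) f
          + X (t+1) ^ 2 * X (t+2) * rename (⇑(Equiv.swap (t+1) (t+2)) ∘ ⇑(Equiv.swap t (t+2))) f
          - X (t+1) * X (t+2) ^ 2 * rename (⇑(Equiv.swap t (t+2))) f) := by
    linear_combination (X t - X (t+1)) * (X t - X (t+2)) * (X (t+1) - X (t+2)) * Eg3
      + X t * K2 - X (t+1) * K2h
  have KL' := mul_left_cancel₀ hab KL
  have K2' : (X t - X (t+1)) * (X t - X (t+2)) * (X (t+1) - X (t+2)) * DX t (DX (t+1) f)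
      = (X t - X (t+2)) * X t * (X (t+1) * f - X (t+2) * rename (⇑(Equiv.swap (t+1) (t+2))) f)
        - (X (t+1) - X (t+2)) * X (t+1) *
          (X t * rename (⇑(Equiv.swap t (t+1))) f
            - X (t+2) * rename (⇑(Equiv.swap (t+1) (t+2)) ∘ ⇑(Equiv.swap t (t+2))) f) := by
    linear_combination (X t - X (t+2)) * (X (t+1) - X (t+2)) * Eg2'
      + X t * (X t - X (t+2)) * E1' - X (t+1) * (X (t+1) - X (t+2)) * Eh1'
  have K2h' : (X t - X (t+1)) * (X t - X (t+2)) * (X (t+1) - X (t+2)) *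
        rename (⇑(Equiv.swap (t+1) (t+2))) (DX t (DX (t+1) f))
      = (X t - X (t+1)) * X t * (X (t+1) * f - X (t+2) * rename (⇑(Equiv.swap (t+1) (t+2))) f)
        - (X (t+1) - X (t+2)) * X (t+2) *
          (X t * rename (⇑(Equiv.swap t (t+2)) ∘ ⇑(Equiv.swap (t+1) (t+2))) f
            - X (t+1) * rename (⇑(Equiv.swap t (t+2))) f) := by
    linear_combination (X t - X (t+1)) * (X (t+1) - X (t+2)) * Eh2'
      + X t * (X t - X (t+1)) * E1' - X (t+2) * (X (t+1) - X (t+2)) * Eh3'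
  have KR : (X (t+1) - X (t+2)) * ((X t - X (t+1)) * (X t - X (t+2)) * (X (t+1) - X (t+2)) *
        DX (t+1) (DX t (DX (t+1) f)))
      = (X (t+1) - X (t+2)) *
        (X t ^ 2 * X (t+1) * f
          - X t * X (t+1) ^ 2 * rename (⇑(Equiv.swap t (t+1))) f
          - X t ^ 2 * X (t+2) * rename (⇑(Equiv.swap (t+1) (t+2))) f
          + X t * X (t+2) ^ 2 * rename (⇑(Equiv.swap t (t+2)) ∘ ⇑(Equiv.swap (t+1) (t+2))) f
          + X (t+1) ^ 2 * X (t+2) * rename (⇑(Equiv.swap (t+1) (t+2)) ∘ ⇑(Equiv.swap t (t+2))) f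
          - X (t+1) * X (t+2) ^ 2 * rename (⇑(Equiv.swap t (t+2))) f) := by
    linear_combination (X t - X (t+1)) * (X t - X (t+2)) * (X (t+1) - X (t+2)) * Eg3'
      + X (t+1) * K2' - X (t+2) * K2h'
  have KR' := mul_left_cancel₀ hbc KR
  exact mul_left_cancel₀ (mul_ne_zero (mul_ne_zero hab hac) hbc)
    (by linear_combination KL' - KR')






-- DX u commutes past a whole column whose letters are all ≤ u - 2
lemma DX_comm_Cblock : ∀ s t0 u, t0 + s + 1 ≤ u → ∀ f : MvPolynomial ℕ ℤ,
    DX u (Cblock t0 s f) = Cblock t0 s (DX u f) := by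
  intro s
  induction s with
  | zero => intro t0 u _ f; rfl
  | succ s ih =>
      intro t0 u hu f
      calc DX u (Cblock t0 (s+1) f) = DX u (DX (t0+s) (Cblock t0 s f)) := rfl
        _ = DX (t0+s) (DX u (Cblock t0 s f)) := (DX_comm (by omega) _).symm
        _ = DX (t0+s) (Cblock t0 s (DX u f)) := by rw [ih t0 u (by omega)]
        _ = Cblock t0 (s+1) (DX u f) := rfl

lemma DX_star : ∀ s t0 j, t0 ≤ j → j + 2 ≤ t0 + s → ∀ f : MvPolynomial ℕ ℤ,
    DX j (Cblock t0 s f) = Cblock t0 s (DX (j+1) f) := by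
  intro s
  induction s with
  | zero => intro t0 j hj hj2; omega
  | succ s ih =>
      intro t0 j hj hj2 f
      rcases lt_or_eq_of_le hj2 with hlt | heq
      · calc DX j (Cblock t0 (s+1) f) = DX j (DX (t0+s) (Cblock t0 s f)) := rfl
          _ = DX (t0+s) (DX j (Cblock t0 s f)) := DX_comm (by omega) _
          _ = DX (t0+s) (Cblock t0 s (DX (j+1) f)) := by rw [ih t0 j hj (by omega)]
          _ = Cblock t0 (s+1) (DX (j+1) f) := rfl
      · obtain ⟨s', rfl⟩ : ∃ s', s = s' + 1 := ⟨s - 1, by omega⟩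
        have ht0s' : t0 + s' = j := by omega
        have hcb : ∀ g, Cblock t0 (s'+1+1) g = DX (j+1) (DX j (Cblock t0 s' g)) := by
          intro g
          show DX (t0 + (s'+1)) (DX (t0 + s') (Cblock t0 s' g)) = _
          rw [ht0s']
          congr 1
          omega
        rw [hcb, hcb]
        rw [DX_braid j (Cblock t0 s' f)]
        rw [DX_comm_Cblock s' t0 (j+1) (by omega) f]

lemma Cpass : ∀ s' a t0 S, t0 ≤ a → a + s' + 1 ≤ t0 + S → ∀ f : MvPolynomial ℕ ℤ,
    Cblock a s' (Cblock t0 S f) = Cblock t0 S (Cblock (a+1) s' f) := by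
  intro s'
  induction s' with
  | zero => intro a t0 S _ _ f; rfl
  | succ s' ih =>
      intro a t0 S h1 h2 f
      calc Cblock a (s'+1) (Cblock t0 S f)
          = DX (a+s') (Cblock a s' (Cblock t0 S f)) := rfl
        _ = DX (a+s') (Cblock t0 S (Cblock (a+1) s' f)) := by rw [ih a t0 S h1 (by omega)]
        _ = Cblock t0 S (DX (a+s'+1) (Cblock (a+1) s' f)) := DX_star S t0 (a+s') (by omega) (by omega) _
        _ = Cblock t0 S (Cblock (a+1) (s'+1) f) := by
            rw [show a+s'+1 = a+1+s' from by omega]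
            rfl

lemma Epass : ∀ s'' a t0 S, t0 ≤ a → a + s'' + 1 ≤ t0 + S → ∀ f : MvPolynomial ℕ ℤ,
    EjAux a s'' (Cblock t0 S f) = Cblock t0 S (EjAux (a+1) s'' f) := by
  intro s''
  induction s'' with
  | zero => intro a t0 S _ _ f; rfl
  | succ s'' ih =>
      intro a t0 S h1 h2 f
      calc EjAux a (s''+1) (Cblock t0 S f)
          = EjAux a s'' (Cblock a (s''+1) (Cblock t0 S f)) := rfl
        _ = EjAux a s'' (Cblock t0 S (Cblock (a+1) (s''+1) f)) := by
            rw [Cpass (s''+1) a t0 S h1 (by omega)]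
        _ = Cblock t0 S (EjAux (a+1) s'' (Cblock (a+1) (s''+1) f)) := ih a t0 S h1 (by omega) _
        _ = Cblock t0 S (EjAux (a+1) (s''+1) f) := rfl

lemma EjAux_form2 (t0 s : ℕ) (f : MvPolynomial ℕ ℤ) :
    EjAux t0 (s+1) f = Cblock t0 (s+1) (EjAux (t0+1) s f) := by
  have h : EjAux t0 (s+1) f = EjAux t0 s (Cblock t0 (s+1) f) := rfl
  rw [h, Epass s t0 t0 (s+1) (le_refl t0) (by omega)]

lemma EjAux_swap_inv : ∀ s t0 i, t0 ≤ i → i + 1 ≤ t0 + s → ∀ f : MvPolynomial ℕ ℤ,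
    rename (⇑(Equiv.swap i (i+1))) (EjAux t0 s f) = EjAux t0 s f := by
  intro s
  induction s with
  | zero => intro t0 i h1 h2; omega
  | succ s ih =>
      intro t0 i h1 h2 f
      rcases lt_or_eq_of_le h2 with hlt | heq
      · have h : EjAux t0 (s+1) f = EjAux t0 s (Cblock t0 (s+1) f) := rfl
        rw [h]
        exact ih t0 i h1 (by omega) _
      · have hi : i = t0 + s := by omega
        rw [EjAux_form2]
        show rename _ (DX (t0+s) (Cblock t0 s (EjAux (t0+1) s f))) = _
        rw [hi, DX_rename_swap]
        rfl

lemma Cblock_rename (w : Equiv.Perm ℕ) : ∀ s t0, (∀ k, t0 ≤ k → k ≤ t0 + s → w k = k) →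
    ∀ f : MvPolynomial ℕ ℤ, rename (⇑w) (Cblock t0 s f) = Cblock t0 s (rename (⇑w) f) := by
  intro s
  induction s with
  | zero => intro t0 _ f; rfl
  | succ s ih =>
      intro t0 h f
      calc rename (⇑w) (Cblock t0 (s+1) f)
          = rename (⇑w) (DX (t0+s) (Cblock t0 s f)) := rfl
        _ = DX (t0+s) (rename (⇑w) (Cblock t0 s f)) :=
            rename_DX w (h (t0+s) (by omega) (by omega)) (h (t0+s+1) (by omega) (by omega)) _
        _ = DX (t0+s) (Cblock t0 s (rename (⇑w) f)) := by
            rw [ih t0 (fun k hk hk2 => h k hk (by omega)) f]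
        _ = Cblock t0 (s+1) (rename (⇑w) f) := rfl

lemma EjAux_rename (w : Equiv.Perm ℕ) : ∀ s t0, (∀ k, t0 ≤ k → k ≤ t0 + s → w k = k) →
    ∀ f : MvPolynomial ℕ ℤ, rename (⇑w) (EjAux t0 s f) = EjAux t0 s (rename (⇑w) f) := by
  intro s
  induction s with
  | zero => intro t0 _ f; rfl
  | succ s ih =>
      intro t0 h f
      calc rename (⇑w) (EjAux t0 (s+1) f)
          = rename (⇑w) (EjAux t0 s (Cblock t0 (s+1) f)) := rfl
        _ = EjAux t0 s (rename (⇑w) (Cblock t0 (s+1) f)) :=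
            ih t0 (fun k hk hk2 => h k hk (by omega)) _
        _ = EjAux t0 s (Cblock t0 (s+1) (rename (⇑w) f)) := by
            rw [Cblock_rename w (s+1) t0 h f]
        _ = EjAux t0 (s+1) (rename (⇑w) f) := rfl

lemma Ej_rename (w : Equiv.Perm ℕ) (t0 n : ℕ) (h : ∀ k, t0 ≤ k → k < t0 + n → w k = k)
    (f : MvPolynomial ℕ ℤ) : rename (⇑w) (Ej t0 n f) = Ej t0 n (rename (⇑w) f) := by
  cases n with
  | zero => rfl
  | succ n => exact EjAux_rename w n t0 (fun k hk hk2 => h k hk (by omega)) f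

lemma Cblock_fix : ∀ s t0 (f : MvPolynomial ℕ ℤ),
    (∀ i, t0 ≤ i → i + 1 ≤ t0 + s → rename (⇑(Equiv.swap i (i+1))) f = f) →
    Cblock t0 s f = f := by
  intro s
  induction s with
  | zero => intro t0 f _; rfl
  | succ s ih =>
      intro t0 f h
      calc Cblock t0 (s+1) f = DX (t0+s) (Cblock t0 s f) := rfl
        _ = DX (t0+s) f := by rw [ih t0 f (fun i hi hi2 => h i hi (by omega))]
        _ = f := DX_fix (h (t0+s) (by omega) (by omega))

lemma EjAux_fix : ∀ s t0 (f : MvPolynomial ℕ ℤ),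
    (∀ i, t0 ≤ i → i + 1 ≤ t0 + s → rename (⇑(Equiv.swap i (i+1))) f = f) →
    EjAux t0 s f = f := by
  intro s
  induction s with
  | zero => intro t0 f _; rfl
  | succ s ih =>
      intro t0 f h
      calc EjAux t0 (s+1) f = EjAux t0 s (Cblock t0 (s+1) f) := rfl
        _ = EjAux t0 s f := by rw [Cblock_fix (s+1) t0 f h]
        _ = f := ih t0 f (fun i hi hi2 => h i hi (by omega))

lemma Ej_fix (t0 n : ℕ) (f : MvPolynomial ℕ ℤ)
    (h : ∀ i, t0 ≤ i → i + 1 < t0 + n → rename (⇑(Equiv.swap i (i+1))) f = f) :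
    Ej t0 n f = f := by
  cases n with
  | zero => rfl
  | succ n => exact EjAux_fix n t0 f (fun i hi hi2 => h i hi (by omega))

lemma Ej_swap_inv (t0 n i : ℕ) (h1 : t0 ≤ i) (h2 : i + 1 < t0 + n)
    (f : MvPolynomial ℕ ℤ) :
    rename (⇑(Equiv.swap i (i+1))) (Ej t0 n f) = Ej t0 n f :=
  EjAux_swap_inv (n-1) t0 i h1 (by omega) f





section offlemmas
variable {m : ℕ} (rs : Fin m → ℕ)

lemma off_add_le {j' j : Fin m} (h : j' < j) : off m rs j' + rs j' ≤ off m rs j := by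
  have hsub : insert j' (Finset.univ.filter (· < j')) ⊆ Finset.univ.filter (· < j) := by
    intro x hx
    simp only [Finset.mem_insert, Finset.mem_filter, Finset.mem_univ, true_and] at hx ⊢
    rcases hx with rfl | hx
    · exact h
    · exact lt_trans hx h
  have hnm : j' ∉ Finset.univ.filter (· < j') := by simp
  calc off m rs j' + rs j' = ∑ x ∈ insert j' (Finset.univ.filter (· < j')), rs x := by
        rw [Finset.sum_insert hnm, off]; ring
    _ ≤ off m rs j := Finset.sum_le_sum_of_subset hsub

lemma off_add_rs_le : ∀ j : Fin m, off m rs j + rs j ≤ ∑ k, rs k := by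
  intro j
  have hnm : j ∉ Finset.univ.filter (· < j) := by simp
  calc off m rs j + rs j = ∑ x ∈ insert j (Finset.univ.filter (· < j)), rs x := by
        rw [Finset.sum_insert hnm, off]; ring
    _ ≤ ∑ k, rs k := Finset.sum_le_sum_of_subset (Finset.subset_univ _)

lemma block_disjoint {j j' : Fin m} {k : ℕ} (h : j ≠ j')
    (h1 : off m rs j ≤ k) (h2 : k < off m rs j + rs j)
    (h3 : off m rs j' ≤ k) (h4 : k < off m rs j' + rs j') : False := by
  rcases lt_or_gt_of_ne h with hlt | hgt
  · have := off_add_le rs hlt; omega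
  · have := off_add_le rs hgt; omega

lemma off_succ (j : Fin m) (h : j.val + 1 < m) :
    off m rs ⟨j.val + 1, h⟩ = off m rs j + rs j := by
  have hins : Finset.univ.filter (· < (⟨j.val+1, h⟩ : Fin m))
      = insert j (Finset.univ.filter (· < j)) := by
    ext x
    simp only [Finset.mem_insert, Finset.mem_filter, Finset.mem_univ, true_and, Fin.lt_def]
    constructor
    · intro hx
      rcases Nat.lt_or_ge x.val j.val with h1 | h1
      · exact Or.inr h1
      · exact Or.inl (Fin.ext (by omega))
    · intro hx
      rcases hx with rfl | hx
      · omega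
      · omega
  have hnm : j ∉ Finset.univ.filter (· < j) := by simp
  rw [off, hins, Finset.sum_insert hnm, off]; ring

lemma off_last (j : Fin m) (h : j.val + 1 = m) :
    off m rs j + rs j = ∑ k, rs k := by
  have huniv : (Finset.univ : Finset (Fin m)) = insert j (Finset.univ.filter (· < j)) := by
    ext x
    simp only [Finset.mem_insert, Finset.mem_filter, Finset.mem_univ, true_and, Fin.lt_def,
      true_iff]
    have hx : x.val < m := x.isLt
    rcases Nat.lt_or_ge x.val j.val with h1 | h1
    · exact Or.inr h1
    · exact Or.inl (Fin.ext (by omega))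
  have hnm : j ∉ Finset.univ.filter (· < j) := by simp
  rw [huniv, Finset.sum_insert hnm, off]; ring

lemma exists_block {i : ℕ} (hi : i < ∑ k, rs k) :
    ∃ j : Fin m, off m rs j ≤ i ∧ i < off m rs j + rs j := by
  have hm : 0 < m := by
    by_contra hm
    have hm0 : m = 0 := by omega
    subst hm0
    simp at hi
  have h0 : off m rs ⟨0, hm⟩ = 0 := by
    rw [off]
    have he : Finset.univ.filter (· < (⟨0, hm⟩ : Fin m)) = ∅ := by
      apply Finset.filter_eq_empty_iff.mpr
      intro x _
      simp [Fin.lt_def]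
    rw [he, Finset.sum_empty]
  set S := Finset.univ.filter (fun j : Fin m => off m rs j ≤ i) with hS
  have hne : S.Nonempty := ⟨⟨0, hm⟩, by simp [hS, h0]⟩
  set j := S.max' hne with hj
  have hjS : j ∈ S := S.max'_mem hne
  have hji : off m rs j ≤ i := by
    have := hjS
    simp only [hS, Finset.mem_filter] at this
    exact this.2
  refine ⟨j, hji, ?_⟩
  by_contra hc
  push_neg at hc
  rcases Nat.lt_or_ge (j.val + 1) m with hlt | hge
  · set j2 : Fin m := ⟨j.val + 1, hlt⟩ with hj2
    have hoff2 : off m rs j2 = off m rs j + rs j := off_succ rs j hlt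
    have hj2S : j2 ∈ S := by
      simp only [hS, Finset.mem_filter, Finset.mem_univ, true_and]
      omega
    have := S.le_max' j2 hj2S
    rw [← hj] at this
    have hlt2 : j < j2 := by
      simp only [Fin.lt_def, hj2]
      omega
    exact absurd this (not_le.mpr hlt2)
  · have hlast : j.val + 1 = m := by
      have := j.isLt
      omega
    have := off_last rs j hlast
    omega

end offlemmas

lemma foldr_fix {α : Type} (f : α) : ∀ L : List (α → α), (∀ F ∈ L, F f = f) →
    L.foldr (· ∘ ·) id f = f := by
  intro L
  induction L with
  | nil => intro _; rfl
  | cons F L ih =>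
      intro h
      have h1 : L.foldr (· ∘ ·) id f = f := ih (fun G hG => h G (List.mem_cons_of_mem F hG))
      show F (L.foldr (· ∘ ·) id f) = f
      rw [h1]
      exact h F List.mem_cons_self

lemma foldr_absorb {α : Type} (R : α → α) : ∀ L : List (α → α),
    (∀ F ∈ L, R ∘ F = F ∘ R ∨ R ∘ F = F) → (∃ F ∈ L, R ∘ F = F) →
    ∀ x, R (L.foldr (· ∘ ·) id x) = L.foldr (· ∘ ·) id x := by
  intro L
  induction L with
  | nil => rintro _ ⟨F, hF, _⟩; exact absurd hF List.not_mem_nil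
  | cons F L ih =>
      intro hall hex x
      by_cases hF : R ∘ F = F
      · show R (F (L.foldr (· ∘ ·) id x)) = F (L.foldr (· ∘ ·) id x)
        exact congrFun hF _
      · have hcomm : R ∘ F = F ∘ R := by
          rcases hall F List.mem_cons_self with h | h
          · exact h
          · exact absurd h hF
        obtain ⟨G, hG, hGabs⟩ := hex
        have hGL : G ∈ L := by
          rcases List.mem_cons.1 hG with rfl | h
          · exact absurd hGabs hF
          · exact h
        show R (F (L.foldr (· ∘ ·) id x)) = F (L.foldr (· ∘ ·) id x)
        have := congrFun hcomm (L.foldr (· ∘ ·) id x)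
        simp only [Function.comp_apply] at this
        rw [this, ih (fun G hG => hall G (List.mem_cons_of_mem F hG))
          ⟨G, hGL, hGabs⟩ x]

section main
variable {m : ℕ} {rs : Fin m → ℕ}

lemma Efull_swap_inv (j : Fin m) (i : ℕ) (h1 : off m rs j ≤ i)
    (h2 : i + 1 < off m rs j + rs j) (f : MvPolynomial ℕ ℤ) :
    rename (⇑(Equiv.swap i (i+1))) (Efull m rs f) = Efull m rs f := by
  apply foldr_absorb
  · intro F hF
    rw [List.mem_ofFn] at hF
    obtain ⟨j', rfl⟩ := hF
    by_cases hjj : j' = j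
    · subst hjj
      right
      funext g
      exact Ej_swap_inv _ _ i h1 h2 g
    · left
      funext g
      show rename _ (Ej _ _ g) = Ej _ _ (rename _ g)
      apply Ej_rename
      intro k hk hk2
      apply Equiv.swap_apply_of_ne_of_ne
      · rintro rfl
        exact block_disjoint rs hjj hk hk2 h1 (by omega)
      · rintro rfl
        exact block_disjoint rs hjj hk hk2 (by omega) (by omega)
  · refine ⟨Ej (off m rs j) (rs j), ?_, ?_⟩
    · rw [List.mem_ofFn]
      exact ⟨j, rfl⟩
    · funext g
      exact Ej_swap_inv _ _ i h1 h2 g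

lemma Efull_fix (f : MvPolynomial ℕ ℤ)
    (hf : ∀ (j : Fin m) (i : ℕ), off m rs j ≤ i → i + 1 < off m rs j + rs j →
      rename (⇑(Equiv.swap i (i+1))) f = f) :
    Efull m rs f = f := by
  apply foldr_fix
  intro F hF
  rw [List.mem_ofFn] at hF
  obtain ⟨j, rfl⟩ := hF
  exact Ej_fix _ _ f (fun i hi hi2 => hf j i hi hi2)

-- arbitrary swaps within a block fix F
lemma rename_swap_in_block (F : MvPolynomial ℕ ℤ)
    (hswap : ∀ (j : Fin m) (i : ℕ), off m rs j ≤ i → i + 1 < off m rs j + rs j →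
      rename (⇑(Equiv.swap i (i+1))) F = F)
    (j : Fin m) : ∀ d a b, b - a = d → off m rs j ≤ a → a < b → b < off m rs j + rs j →
      rename (⇑(Equiv.swap a b)) F = F := by
  intro d
  induction d using Nat.strong_induction_on with
  | _ d ih =>
      intro a b hd ha hab hb
      rcases eq_or_lt_of_le (Nat.succ_le_of_lt hab) with hb1 | hb1
      · rw [← hb1]
        exact hswap j a ha (by omega)
      · -- a + 1 < b
        have hsw : Equiv.swap a b
            = Equiv.swap (a+1) a * Equiv.swap b (a+1) * Equiv.swap (a+1) a := by
          rw [Equiv.swap_mul_swap_mul_swap (show b ≠ a+1 by omega) (show b ≠ a by omega)]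
        have hcoe : ⇑(Equiv.swap a b)
            = ⇑(Equiv.swap (a+1) a) ∘ ⇑(Equiv.swap b (a+1)) ∘ ⇑(Equiv.swap (a+1) a) := by
          rw [hsw]
          rfl
        rw [hcoe, ← rename_rename, ← rename_rename]
        have e1 : rename (⇑(Equiv.swap (a+1) a)) F = F := by
          rw [Equiv.swap_comm]
          exact hswap j a ha (by omega)
        have e2 : rename (⇑(Equiv.swap b (a+1))) F = F := by
          rw [Equiv.swap_comm]
          exact ih (b - (a+1)) (by omega) (a+1) b rfl (by omega) (by omega) (by omega)
        rw [e1, e2, e1]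

lemma rename_allowed (r : ℕ) (hsum : ∑ k, rs k = r) (F : MvPolynomial ℕ ℤ)
    (hswap : ∀ (j : Fin m) (i : ℕ), off m rs j ≤ i → i + 1 < off m rs j + rs j →
      rename (⇑(Equiv.swap i (i+1))) F = F) :
    ∀ (g : Equiv.Perm ℕ), (∀ i, r ≤ i → g i = i) →
      (∀ (j : Fin m) (i : ℕ), off m rs j ≤ i → i < off m rs j + rs j →
        off m rs j ≤ g i ∧ g i < off m rs j + rs j) →
      rename (⇑g) F = F := by
  suffices H : ∀ n (g : Equiv.Perm ℕ),
      ((Finset.range r).filter (fun i => g i ≠ i)).card = n →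
      (∀ i, r ≤ i → g i = i) →
      (∀ (j : Fin m) (i : ℕ), off m rs j ≤ i → i < off m rs j + rs j →
        off m rs j ≤ g i ∧ g i < off m rs j + rs j) →
      rename (⇑g) F = F by
    intro g hfix hblk
    exact H _ g rfl hfix hblk
  intro n
  induction n using Nat.strong_induction_on with
  | _ n ih =>
      intro g hcard hfix hblk
      by_cases hg : ∀ x, g x = x
      · have : ⇑g = id := funext hg
        rw [this, rename_id, AlgHom.id_apply]
      · push_neg at hg
        set A := (Finset.range r).filter (fun i => g i ≠ i) with hA
        have hAne : A.Nonempty := by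
          obtain ⟨x, hx⟩ := hg
          refine ⟨x, ?_⟩
          simp only [hA, Finset.mem_filter, Finset.mem_range]
          refine ⟨?_, hx⟩
          by_contra hxr
          exact hx (hfix x (by omega))
        set a := A.min' hAne with ha
        have haA : a ∈ A := A.min'_mem hAne
        have har : a < r := by
          have := haA; simp only [hA, Finset.mem_filter, Finset.mem_range] at this
          exact this.1
        have hga : g a ≠ a := by
          have := haA; simp only [hA, Finset.mem_filter, Finset.mem_range] at this
          exact this.2
        have hmin : ∀ y, y < a → g y = y := by
          intro y hy
          by_contra hgy
          have hyA : y ∈ A := by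
            simp only [hA, Finset.mem_filter, Finset.mem_range]
            exact ⟨by omega, hgy⟩
          exact absurd (A.min'_le y hyA) (by omega)
        have hga2 : a < g a := by
          rcases Nat.lt_or_ge (g a) a with hlt | hge
          · exact absurd (g.injective (hmin (g a) hlt)) hga
          · omega
        obtain ⟨j, hja, hja2⟩ := exists_block rs (show a < ∑ k, rs k by omega)
        obtain ⟨hgja, hgja2⟩ := hblk j a hja hja2
        set t := Equiv.swap a (g a) with ht
        set g' := t * g with hg'
        have hg'a : g' a = a := by
          simp [hg', ht, Equiv.Perm.mul_apply, Equiv.swap_apply_right]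
        have hg'other : ∀ x, g x = x → x ≠ a → x ≠ g a → g' x = x := by
          intro x hx hxa hxga
          simp only [hg', Equiv.Perm.mul_apply, hx]
          exact Equiv.swap_apply_of_ne_of_ne hxa hxga
        have hfix' : ∀ i, r ≤ i → g' i = i := by
          intro i hi
          apply hg'other i (hfix i hi) (by omega)
          intro h
          have hlt : g a < r := by
            have := off_add_rs_le rs j
            omega
          omega
        have hblk' : ∀ (j' : Fin m) (i : ℕ), off m rs j' ≤ i → i < off m rs j' + rs j' →
            off m rs j' ≤ g' i ∧ g' i < off m rs j' + rs j' := by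
          intro j' i hi hi2
          obtain ⟨hgi, hgi2⟩ := hblk j' i hi hi2
          simp only [hg', Equiv.Perm.mul_apply, ht]
          by_cases h1 : g i = a
          · rw [h1, Equiv.swap_apply_left]
            have hjj : j' = j := by
              by_contra hne
              exact block_disjoint rs hne (h1 ▸ hgi) (h1 ▸ hgi2) hja hja2
            subst hjj
            exact ⟨hgja, hgja2⟩
          · by_cases h2 : g i = g a
            · have : i = a := g.injective h2
              subst this
              rw [h2, Equiv.swap_apply_right]
              have hjj : j' = j := by
                by_contra hne
                exact block_disjoint rs hne hi hi2 hja hja2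
              subst hjj
              exact ⟨hja, hja2⟩
            · rw [Equiv.swap_apply_of_ne_of_ne h1 h2]
              exact ⟨hgi, hgi2⟩
        have hcard' : ((Finset.range r).filter (fun i => g' i ≠ i)).card < n := by
          rw [← hcard]
          have hsub : (Finset.range r).filter (fun i => g' i ≠ i) ⊆ A.erase a := by
            intro x hx
            simp only [Finset.mem_filter, Finset.mem_range] at hx
            rw [Finset.mem_erase]
            constructor
            · rintro rfl
              exact hx.2 hg'a
            · simp only [hA, Finset.mem_filter, Finset.mem_range]
              refine ⟨hx.1, fun hgx => hx.2 ?_⟩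
              by_cases hxa : x = a
              · subst hxa
                exact absurd hgx hga
              · by_cases hxga : x = g a
                · subst hxga
                  exact absurd (g.injective hgx) hga
                · exact hg'other x hgx hxa hxga
          calc ((Finset.range r).filter (fun i => g' i ≠ i)).card
              ≤ (A.erase a).card := Finset.card_le_card hsub
            _ < A.card := Finset.card_erase_lt_of_mem haA
        have hrg' : rename (⇑g') F = F := ih _ hcard' g' rfl hfix' hblk'
        have hgdecomp : ⇑g = ⇑t ∘ ⇑g' := by
          funext x
          simp [hg', ht, Equiv.Perm.mul_apply, Equiv.swap_apply_self]
        rw [hgdecomp, ← rename_rename, hrg']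
        exact rename_swap_in_block F hswap j (g a - a) a (g a) rfl hja hga2 hgja2

end main


/-- For a composition `(r_1,…,r_m)` of `r`, the nil-Hecke element `E = E_1⋯E_m` is an
idempotent operator on `ℤ[x_1,x_2,…]` whose image is the ring of invariants under the Young
subgroup `S_{r_1} × ⋯ × S_{r_m}` (acting on the first `r` variables). -/
theorem Efull_idempotent_range_eq_invariants (r m : ℕ) (rs : Fin m → ℕ)
    (hsum : ∑ j, rs j = r) :
    Efull m rs ∘ Efull m rs = Efull m rs ∧
    Set.range (Efull m rs)
      = {f : MvPolynomial ℕ ℤ |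
          ∀ g : Equiv.Perm ℕ, (∀ i, r ≤ i → g i = i) →
            (∀ j : Fin m, ∀ i : ℕ, off m rs j ≤ i → i < off m rs j + rs j →
              off m rs j ≤ g i ∧ g i < off m rs j + rs j) →
            rename g f = f} := by

  constructor
  · funext f
    show Efull m rs (Efull m rs f) = Efull m rs f
    exact Efull_fix _ (fun j i hi hi2 => Efull_swap_inv j i hi hi2 f)
  · ext f
    simp only [Set.mem_range, Set.mem_setOf_eq]
    constructor
    · rintro ⟨g, rfl⟩ w hfix hblk
      exact rename_allowed r hsum (Efull m rs g)
        (fun j i hi hi2 => Efull_swap_inv j i hi hi2 g) w hfix hblk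
    · intro hf
      refine ⟨f, ?_⟩
      apply Efull_fix
      intro j i hi hi2
      have hrle : off m rs j + rs j ≤ r := by
        rw [← hsum]
        exact off_add_rs_le rs j
      apply hf (Equiv.swap i (i+1))
      · intro k hk
        exact Equiv.swap_apply_of_ne_of_ne (by omega) (by omega)
      · intro j' k hk hk2
        by_cases h1 : k = i
        · subst h1
          rw [Equiv.swap_apply_left]
          have hjj : j' = j := by
            by_contra hne
            exact block_disjoint rs hne hk hk2 hi (by omega)
          subst hjj
          omega
        · by_cases h2 : k = i + 1
          · subst h2
            rw [Equiv.swap_apply_right]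
            have hjj : j' = j := by
              by_contra hne
              exact block_disjoint rs hne hk hk2 (by omega) hi2
            subst hjj
            omega
          · rw [Equiv.swap_apply_of_ne_of_ne h1 h2]
            exact ⟨hk, hk2⟩
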